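/- In the random-binning Slepian–Wolf scheme with minimum-joint-entropy decoding, the probability of error event E₁ (some y₁' ≠ Y₁ in the same bin as Y₁ with H_{y₁', Y₂}(Y₁|Y₂) ≤ H_{Y₁, Y₂}(Y₁|Y₂), while (Y₁,Y₂) is typical) is at most (n+1)^{|𝒴₁||𝒴₂|} · 2^{-nR₁} · 2^{n(H(Y₁|Y₂)+2ε)}; consequently if R₁ > H(Y₁|Y₂)+2ε then Pr(E₁) → 0 as n → ∞. -/

import Mathlib

open Real Filter

/-- Empirical joint type of the pair of sequences `(y₁, y₂)`. -/
noncomputable def jointType {A B : Type*} [DecidableEq A] [DecidableEq B] {n : ℕ}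
    (y₁ : Fin n → A) (y₂ : Fin n → B) (a : A) (b : B) : ℝ :=
  ((Finset.univ.filter (fun k => y₁ k = a ∧ y₂ k = b)).card : ℝ) / n

/-- Empirical type of the sequence `y₂`. -/
noncomputable def margType {B : Type*} [DecidableEq B] {n : ℕ} (y₂ : Fin n → B) (b : B) : ℝ :=
  ((Finset.univ.filter (fun k => y₂ k = b)).card : ℝ) / n

/-- Empirical conditional entropy (in bits) `H_{y₁,y₂}(Y₁ | Y₂)` induced by `(y₁, y₂)`. -/
noncomputable def empCondEntropy {A B : Type*} [Fintype A] [Fintype B]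
    [DecidableEq A] [DecidableEq B] {n : ℕ} (y₁ : Fin n → A) (y₂ : Fin n → B) : ℝ :=
  -∑ a : A, ∑ b : B, jointType y₁ y₂ a b * logb 2 (jointType y₁ y₂ a b / margType y₂ b)

section Aux
open Finset
set_option linter.unusedSectionVars false
variable {A B : Type*} [Fintype A] [Fintype B] [DecidableEq A] [DecidableEq B] {n : ℕ}

/-- joint count -/
def cnt (y₁ : Fin n → A) (y₂ : Fin n → B) (a : A) (b : B) : ℕ :=
  (Finset.univ.filter (fun k => y₁ k = a ∧ y₂ k = b)).card

def cntB (y₂ : Fin n → B) (b : B) : ℕ :=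
  (Finset.univ.filter (fun k => y₂ k = b)).card

lemma sum_cnt (y₁ : Fin n → A) (y₂ : Fin n → B) (b : B) :
    ∑ a : A, cnt y₁ y₂ a b = cntB y₂ b := by
  classical
  rw [cntB, Finset.card_eq_sum_card_fiberwise (f := y₁) (t := Finset.univ)
    (fun x _ => Finset.mem_univ _)]
  refine Finset.sum_congr rfl fun a _ => ?_
  rw [cnt, Finset.filter_filter]
  congr 1
  ext k
  simp only [Finset.mem_filter]
  tauto

lemma cnt_le_cntB (y₁ : Fin n → A) (y₂ : Fin n → B) (a : A) (b : B) :
    cnt y₁ y₂ a b ≤ cntB y₂ b :=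
  Finset.card_le_card (by intro k hk; simp only [Finset.mem_filter] at *; tauto)

lemma cnt_le_n (y₁ : Fin n → A) (y₂ : Fin n → B) (a : A) (b : B) :
    cnt y₁ y₂ a b ≤ n := by
  simpa [cnt] using Finset.card_le_card (Finset.filter_subset _ (Finset.univ : Finset (Fin n)))

lemma jointType_eq (y₁ : Fin n → A) (y₂ : Fin n → B) (a : A) (b : B) :
    jointType y₁ y₂ a b = (cnt y₁ y₂ a b : ℝ) / n := rfl

lemma margType_eq (y₂ : Fin n → B) (b : B) :
    margType y₂ b = (cntB y₂ b : ℝ) / n := rfl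

lemma empCondEntropy_eq (hn : 0 < n) (y₁ : Fin n → A) (y₂ : Fin n → B) :
    -(n : ℝ) * empCondEntropy y₁ y₂ =
      ∑ ab : A × B, (cnt y₁ y₂ ab.1 ab.2 : ℝ) *
        logb 2 ((cnt y₁ y₂ ab.1 ab.2 : ℝ) / (cntB y₂ ab.2 : ℝ)) := by
  have hn' : (n : ℝ) ≠ 0 := Nat.cast_ne_zero.mpr hn.ne'
  rw [empCondEntropy, Fintype.sum_prod_type]
  rw [neg_mul_neg, Finset.mul_sum]
  refine Finset.sum_congr rfl fun a _ => ?_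
  rw [Finset.mul_sum]
  refine Finset.sum_congr rfl fun b _ => ?_
  rw [jointType_eq, margType_eq]
  rw [div_div_div_comm, div_self hn', div_one]
  field_simp

lemma cntB_pos (y₂ : Fin n → B) (k : Fin n) : 0 < cntB y₂ (y₂ k) :=
  Finset.card_pos.mpr ⟨k, by simp [Finset.mem_filter]⟩

lemma prod_q (hn : 0 < n) (y₁ : Fin n → A) (y₂ : Fin n → B) :
    ∏ k, ((cnt y₁ y₂ (y₁ k) (y₂ k) : ℝ) / (cntB y₂ (y₂ k) : ℝ))
      = 2 ^ (-(n : ℝ) * empCondEntropy y₁ y₂) := by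
  rw [empCondEntropy_eq hn, Real.rpow_sum_of_pos (by norm_num)]
  rw [← Finset.prod_fiberwise_of_maps_to (g := fun k => (y₁ k, y₂ k))
    (t := Finset.univ) (fun x _ => Finset.mem_univ _)
    (fun k => ((cnt y₁ y₂ (y₁ k) (y₂ k) : ℝ) / (cntB y₂ (y₂ k) : ℝ)))]
  refine Finset.prod_congr rfl fun ab _ => ?_
  have hfe : Finset.univ.filter (fun k => (y₁ k, y₂ k) = ab)
      = Finset.univ.filter (fun k => y₁ k = ab.1 ∧ y₂ k = ab.2) := by
    ext k; simp [Prod.ext_iff]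
  have hcard : (Finset.univ.filter (fun k => (y₁ k, y₂ k) = ab)).card
      = cnt y₁ y₂ ab.1 ab.2 := by rw [hfe]; rfl
  have hterm : ∀ k ∈ Finset.univ.filter (fun k => (y₁ k, y₂ k) = ab),
      ((cnt y₁ y₂ (y₁ k) (y₂ k) : ℝ) / (cntB y₂ (y₂ k) : ℝ))
        = ((cnt y₁ y₂ ab.1 ab.2 : ℝ) / (cntB y₂ ab.2 : ℝ)) := by
    intro k hk
    simp only [Finset.mem_filter] at hk
    rw [← hk.2]
  rw [Finset.prod_congr rfl hterm, Finset.prod_const, hcard]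
  rcases Nat.eq_zero_or_pos (cnt y₁ y₂ ab.1 ab.2) with h0 | hpos
  · simp [h0]
  · have hB : 0 < cntB y₂ ab.2 := lt_of_lt_of_le hpos (cnt_le_cntB _ _ _ _)
    have hq : (0 : ℝ) < (cnt y₁ y₂ ab.1 ab.2 : ℝ) / (cntB y₂ ab.2 : ℝ) := by positivity
    rw [mul_comm, Real.rpow_mul (by norm_num), Real.rpow_logb (by norm_num) (by norm_num) hq,
      Real.rpow_natCast]

lemma sum_weights (y₂ : Fin n → B) (z : Fin n → A) :
    ∑ y₁ : Fin n → A, ∏ k, ((cnt z y₂ (y₁ k) (y₂ k) : ℝ) / (cntB y₂ (y₂ k) : ℝ)) = 1 := by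
  classical
  rw [← Fintype.piFinset_univ,
    ← Finset.prod_univ_sum (fun _ => Finset.univ)
      (fun k a => ((cnt z y₂ a (y₂ k) : ℝ) / (cntB y₂ (y₂ k) : ℝ)))]
  rw [Finset.prod_congr rfl (fun k _ => ?_), Finset.prod_const_one]
  have hB : (0 : ℝ) < (cntB y₂ (y₂ k) : ℝ) := Nat.cast_pos.mpr (cntB_pos y₂ k)
  rw [← Finset.sum_div]
  rw [show ∑ a : A, ((cnt z y₂ a (y₂ k) : ℝ)) = (cntB y₂ (y₂ k) : ℝ) by
    exact_mod_cast congrArg (fun m : ℕ => (m : ℝ)) (sum_cnt z y₂ (y₂ k))]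
  exact div_self hB.ne'

lemma empCondEntropy_congr (y₂ : Fin n → B) {y₁ z : Fin n → A}
    (h : ∀ a b, cnt y₁ y₂ a b = cnt z y₂ a b) :
    empCondEntropy y₁ y₂ = empCondEntropy z y₂ := by
  unfold empCondEntropy
  congr 1
  refine Finset.sum_congr rfl fun a _ => Finset.sum_congr rfl fun b _ => ?_
  rw [jointType_eq, jointType_eq, h a b]

/-- size of a conditional type class -/
lemma typeclass_card (hn : 0 < n) (y₂ : Fin n → B) (z : Fin n → A) :
    ((Finset.univ.filter (fun y₁ : Fin n → A => ∀ a b, cnt y₁ y₂ a b = cnt z y₂ a b)).card : ℝ)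
      ≤ 2 ^ ((n : ℝ) * empCondEntropy z y₂) := by
  classical
  set w : (Fin n → A) → ℝ :=
    fun y₁ => ∏ k, ((cnt z y₂ (y₁ k) (y₂ k) : ℝ) / (cntB y₂ (y₂ k) : ℝ)) with hw
  have hw0 : ∀ y₁, 0 ≤ w y₁ := fun y₁ => Finset.prod_nonneg fun k _ => by positivity
  have hsub : ∑ y₁ ∈ Finset.univ.filter
      (fun y₁ : Fin n → A => ∀ a b, cnt y₁ y₂ a b = cnt z y₂ a b), w y₁ ≤ 1 := by
    rw [← sum_weights y₂ z]
    exact Finset.sum_le_sum_of_subset_of_nonneg (Finset.filter_subset _ _)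
      (fun y₁ _ _ => hw0 y₁)
  have hconst : ∀ y₁ ∈ Finset.univ.filter
      (fun y₁ : Fin n → A => ∀ a b, cnt y₁ y₂ a b = cnt z y₂ a b),
      w y₁ = 2 ^ (-(n : ℝ) * empCondEntropy z y₂) := by
    intro y₁ hy₁
    simp only [Finset.mem_filter] at hy₁
    have h := hy₁.2
    have : w y₁ = ∏ k, ((cnt y₁ y₂ (y₁ k) (y₂ k) : ℝ) / (cntB y₂ (y₂ k) : ℝ)) := by
      refine Finset.prod_congr rfl fun k _ => by rw [h]
    rw [this, prod_q hn y₁ y₂, empCondEntropy_congr y₂ h]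
  rw [Finset.sum_congr rfl hconst, Finset.sum_const, nsmul_eq_mul] at hsub
  have h2 : (0:ℝ) < 2 ^ (-(n : ℝ) * empCondEntropy z y₂) := Real.rpow_pos_of_pos (by norm_num) _
  rw [← le_div_iff₀ h2] at hsub
  calc _ ≤ (1 : ℝ) / 2 ^ (-(n : ℝ) * empCondEntropy z y₂) := hsub
    _ = 2 ^ ((n : ℝ) * empCondEntropy z y₂) := by
        rw [one_div, ← Real.rpow_neg (by norm_num), neg_mul, neg_neg]

/-- number of sequences of low empirical conditional entropy -/
lemma low_entropy_card (hn : 0 < n) (y₂ : Fin n → B) (H : ℝ) :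
    ((Finset.univ.filter (fun y₁ : Fin n → A => empCondEntropy y₁ y₂ ≤ H)).card : ℝ)
      ≤ ((n : ℝ) + 1) ^ (Fintype.card A * Fintype.card B) * 2 ^ ((n : ℝ) * H) := by
  classical
  set S := Finset.univ.filter (fun y₁ : Fin n → A => empCondEntropy y₁ y₂ ≤ H) with hS
  set T : (Fin n → A) → (A × B → Fin (n+1)) :=
    fun y₁ ab => ⟨cnt y₁ y₂ ab.1 ab.2, Nat.lt_succ_of_le (cnt_le_n y₁ y₂ ab.1 ab.2)⟩ with hT
  have hcard := Finset.card_eq_sum_card_fiberwise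
    (f := T) (s := S) (t := S.image T) (fun x hx => Finset.mem_image_of_mem T hx)
  have hfib : ∀ t ∈ S.image T, ((S.filter (fun y₁ => T y₁ = t)).card : ℝ)
      ≤ 2 ^ ((n : ℝ) * H) := by
    intro t ht
    obtain ⟨z, hzS, hzt⟩ := Finset.mem_image.mp ht
    have hzH : empCondEntropy z y₂ ≤ H := (Finset.mem_filter.mp hzS).2
    have hsub : S.filter (fun y₁ => T y₁ = t)
        ⊆ Finset.univ.filter (fun y₁ : Fin n → A => ∀ a b, cnt y₁ y₂ a b = cnt z y₂ a b) := by
      intro y₁ hy₁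
      simp only [Finset.mem_filter] at hy₁ ⊢
      refine ⟨Finset.mem_univ _, fun a b => ?_⟩
      have h3 := congrFun (hy₁.2.trans hzt.symm) (a, b)
      exact congrArg Fin.val h3
    calc ((S.filter (fun y₁ => T y₁ = t)).card : ℝ)
        ≤ _ := Nat.cast_le.mpr (Finset.card_le_card hsub)
      _ ≤ 2 ^ ((n : ℝ) * empCondEntropy z y₂) := typeclass_card hn y₂ z
      _ ≤ 2 ^ ((n : ℝ) * H) := by
          apply Real.rpow_le_rpow_of_exponent_le (by norm_num)
          exact mul_le_mul_of_nonneg_left hzH (Nat.cast_nonneg n)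
  have himg : ((S.image T).card : ℝ) ≤ ((n : ℝ) + 1) ^ (Fintype.card A * Fintype.card B) := by
    have h1 : (S.image T).card ≤ Fintype.card (A × B → Fin (n+1)) :=
      Finset.card_le_univ _ |>.trans (le_of_eq (Finset.card_univ))
    have h2 : Fintype.card (A × B → Fin (n+1)) = (n+1) ^ (Fintype.card A * Fintype.card B) := by
      rw [Fintype.card_fun, Fintype.card_fin, Fintype.card_prod]
    calc ((S.image T).card : ℝ) ≤ ((n+1 : ℕ) ^ (Fintype.card A * Fintype.card B) : ℕ) := by
          exact_mod_cast h1.trans (le_of_eq h2)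
      _ = ((n : ℝ) + 1) ^ (Fintype.card A * Fintype.card B) := by push_cast; ring
  calc (S.card : ℝ) = ∑ t ∈ S.image T, ((S.filter (fun y₁ => T y₁ = t)).card : ℝ) := by
        exact_mod_cast congrArg (fun m : ℕ => (m : ℝ)) hcard
    _ ≤ ∑ t ∈ S.image T, (2 : ℝ) ^ ((n : ℝ) * H) := Finset.sum_le_sum hfib
    _ = ((S.image T).card : ℝ) * 2 ^ ((n : ℝ) * H) := by rw [Finset.sum_const, nsmul_eq_mul]
    _ ≤ _ := by
        apply mul_le_mul_of_nonneg_right himg (Real.rpow_nonneg (by norm_num) _)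

lemma binEq_card {c d : Fin n → A} (hcd : c ≠ d) (M : ℕ) :
    (Finset.univ.filter (fun f : (Fin n → A) → Fin M => f c = f d)).card * M
      = M ^ (Fintype.card (Fin n → A)) := by
  classical
  have e : ({f : (Fin n → A) → Fin M // f c = f d} × Fin M) ≃ ((Fin n → A) → Fin M) :=
    { toFun := fun p => Function.update p.1.val c p.2
      invFun := fun g => (⟨Function.update g c (g d), by
          rw [Function.update_self, Function.update_of_ne (Ne.symm hcd)]⟩, g c)
      left_inv := fun p => by
        obtain ⟨⟨f, hf⟩, v⟩ := p
        refine Prod.ext (Subtype.ext ?_) (by simp)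
        simp only [Function.update_idem, Function.update_of_ne (Ne.symm hcd)]
        rw [← hf, Function.update_eq_self]
      right_inv := fun g => by
        simp only [Function.update_idem, Function.update_self, Function.update_eq_self] }
  have hc := Fintype.card_congr e
  rw [Fintype.card_prod, Fintype.card_subtype, Fintype.card_fin, Fintype.card_fun,
    Fintype.card_fin] at hc
  exact hc

lemma sum_prob_le_one (p : A × B → ℝ) (hp0 : ∀ x, 0 ≤ p x) (hp1 : ∑ x, p x = 1)
    (Aε : Finset ((Fin n → A) × (Fin n → B))) :
    ∑ y ∈ Aε, ∏ k, p (y.1 k, y.2 k) ≤ 1 := by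
  classical
  have h1 : ∑ y ∈ Aε, ∏ k, p (y.1 k, y.2 k)
      ≤ ∑ y : (Fin n → A) × (Fin n → B), ∏ k, p (y.1 k, y.2 k) :=
    Finset.sum_le_sum_of_subset_of_nonneg (Finset.subset_univ _)
      (fun y _ _ => Finset.prod_nonneg fun k _ => hp0 _)
  refine h1.trans (le_of_eq ?_)
  rw [← Fintype.sum_equiv (Equiv.arrowProdEquivProdArrow (Fin n) (fun _ => A) (fun _ => B))
    (fun g => ∏ k, p (g k)) (fun y => ∏ k, p (y.1 k, y.2 k)) (fun g => by
      refine Finset.prod_congr rfl fun k _ => ?_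
      simp [Equiv.arrowProdEquivProdArrow])]
  rw [← Fintype.piFinset_univ, ← Finset.prod_univ_sum (fun _ => Finset.univ) (fun _ ab => p ab)]
  simp [hp1]

end Aux

/-- Random-binning error bound for the event `E₁`: the source-averaged probability (over the
i.i.d. source and the uniformly random bin assignment `f₁` into `M ≥ 2^{nR₁}` bins) that some
`y₁' ≠ Y₁` shares `Y₁`'s bin with no larger empirical conditional entropy, while `(Y₁, Y₂)`
is typical, is at most `(n+1)^{|𝒴₁||𝒴₂|}·2^{-nR₁}·2^{n(H(Y₁|Y₂)+2ε)}`; consequently, if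
`R₁ > H(Y₁|Y₂) + 2ε` this bound tends to `0` as `n → ∞`. -/
theorem binning_error_E1_bound
    {A B : Type*} [Fintype A] [Fintype B] [DecidableEq A] [DecidableEq B]
    (p : A × B → ℝ) (hp0 : ∀ x, 0 ≤ p x) (hp1 : ∑ x, p x = 1)
    (n : ℕ) (hn : 0 < n) (ε R₁ : ℝ) (hε : 0 ≤ ε)
    (M : ℕ) (hM0 : 0 < M) (hM : (2 : ℝ) ^ ((n : ℝ) * R₁) ≤ (M : ℝ))
    (Hcond : ℝ)
    (hHcond : Hcond = (-∑ x : A × B, p x * logb 2 (p x))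
      - (-∑ b : B, (∑ a : A, p (a, b)) * logb 2 (∑ a : A, p (a, b))))
    (Aε : Finset ((Fin n → A) × (Fin n → B)))
    (hAε : ∀ y ∈ Aε, empCondEntropy y.1 y.2 ≤ Hcond + ε) :
    (∑ y ∈ Aε, (∏ k, p (y.1 k, y.2 k)) *
        (((Set.ncard {f : (Fin n → A) → Fin M |
            ∃ y₁' : Fin n → A, y₁' ≠ y.1 ∧ f y₁' = f y.1 ∧
              empCondEntropy y₁' y.2 ≤ empCondEntropy y.1 y.2}) : ℝ)
          / (M : ℝ) ^ (Fintype.card (Fin n → A)))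
      ≤ ((n : ℝ) + 1) ^ (Fintype.card A * Fintype.card B)
          * 2 ^ (-(n : ℝ) * R₁) * 2 ^ ((n : ℝ) * (Hcond + 2 * ε))) ∧
    (R₁ > Hcond + 2 * ε →
      Tendsto (fun m : ℕ => ((m : ℝ) + 1) ^ (Fintype.card A * Fintype.card B)
          * 2 ^ (-(m : ℝ) * R₁) * 2 ^ ((m : ℝ) * (Hcond + 2 * ε)))
        atTop (nhds 0)) := by
  classical
  set K := Fintype.card A * Fintype.card B with hK
  set N := Fintype.card (Fin n → A) with hN
  have hMpos : (0 : ℝ) < (M : ℝ) := Nat.cast_pos.mpr hM0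
  have hMN : (0 : ℝ) < (M : ℝ) ^ N := pow_pos hMpos _
  set Bnd : ℝ := ((n : ℝ) + 1) ^ K * 2 ^ (-(n : ℝ) * R₁) * 2 ^ ((n : ℝ) * (Hcond + 2 * ε))
    with hBnd
  have hBnd0 : 0 ≤ Bnd := by
    apply mul_nonneg (mul_nonneg (by positivity) (Real.rpow_nonneg (by norm_num) _))
      (Real.rpow_nonneg (by norm_num) _)
  constructor
  · -- main bound
    have hterm : ∀ y ∈ Aε,
        (((Set.ncard {f : (Fin n → A) → Fin M |
            ∃ y₁' : Fin n → A, y₁' ≠ y.1 ∧ f y₁' = f y.1 ∧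
              empCondEntropy y₁' y.2 ≤ empCondEntropy y.1 y.2}) : ℝ) / (M : ℝ) ^ N) ≤ Bnd := by
      intro y hy
      set P : ((Fin n → A) → Fin M) → Prop := fun f =>
        ∃ y₁' : Fin n → A, y₁' ≠ y.1 ∧ f y₁' = f y.1 ∧
          empCondEntropy y₁' y.2 ≤ empCondEntropy y.1 y.2 with hP
      have hset : {f : (Fin n → A) → Fin M | P f} = ↑(Finset.univ.filter P) := by
        ext f; simp
      rw [show {f : (Fin n → A) → Fin M |
            ∃ y₁' : Fin n → A, y₁' ≠ y.1 ∧ f y₁' = f y.1 ∧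
              empCondEntropy y₁' y.2 ≤ empCondEntropy y.1 y.2}
          = {f : (Fin n → A) → Fin M | P f} from rfl, hset, Set.ncard_coe_finset]
      set Sy := Finset.univ.filter (fun y₁' : Fin n → A =>
        y₁' ≠ y.1 ∧ empCondEntropy y₁' y.2 ≤ empCondEntropy y.1 y.2) with hSy
      have hsub : Finset.univ.filter P ⊆
          Sy.biUnion (fun y₁' => Finset.univ.filter (fun f => f y₁' = f y.1)) := by
        intro f hf
        simp only [Finset.mem_filter, Finset.mem_univ, true_and, hP] at hf
        obtain ⟨y₁', h1, h2, h3⟩ := hf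
        exact Finset.mem_biUnion.mpr ⟨y₁', by simp [hSy, h1, h3], by simp [h2]⟩
      have hcards : ((Finset.univ.filter P).card : ℝ) ≤ (Sy.card : ℝ) * ((M : ℝ) ^ N / M) := by
        have h1 : (Finset.univ.filter P).card ≤
            ∑ y₁' ∈ Sy, (Finset.univ.filter (fun f : (Fin n → A) → Fin M
              => f y₁' = f y.1)).card :=
          (Finset.card_le_card hsub).trans (Finset.card_biUnion_le)
        have h2 : ∀ y₁' ∈ Sy, ((Finset.univ.filter (fun f : (Fin n → A) → Fin M
            => f y₁' = f y.1)).card : ℝ) = (M : ℝ) ^ N / M := by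
          intro y₁' hy₁'
          have hne : y₁' ≠ y.1 := (Finset.mem_filter.mp hy₁').2.1
          have := binEq_card hne M
          have hcast : ((Finset.univ.filter (fun f : (Fin n → A) → Fin M
              => f y₁' = f y.1)).card : ℝ) * (M : ℝ) = (M : ℝ) ^ N := by
            exact_mod_cast congrArg (fun m : ℕ => (m : ℝ)) this
          field_simp at hcast ⊢
          linarith [hcast]
        calc ((Finset.univ.filter P).card : ℝ)
            ≤ (∑ y₁' ∈ Sy, (Finset.univ.filter (fun f : (Fin n → A) → Fin M
              => f y₁' = f y.1)).card : ℕ) := by exact_mod_cast h1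
          _ = ∑ y₁' ∈ Sy, ((Finset.univ.filter (fun f : (Fin n → A) → Fin M
              => f y₁' = f y.1)).card : ℝ) := by push_cast; rfl
          _ = ∑ y₁' ∈ Sy, ((M : ℝ) ^ N / M) := Finset.sum_congr rfl h2
          _ = (Sy.card : ℝ) * ((M : ℝ) ^ N / M) := by
              rw [Finset.sum_const, nsmul_eq_mul]
      have hSycard : ((Sy.card : ℝ)) ≤ ((n : ℝ) + 1) ^ K * 2 ^ ((n : ℝ) * (Hcond + ε)) := by
        have hsub2 : Sy ⊆ Finset.univ.filter
            (fun y₁' : Fin n → A => empCondEntropy y₁' y.2 ≤ Hcond + ε) := by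
          intro y₁' hy₁'
          simp only [hSy, Finset.mem_filter, Finset.mem_univ, true_and] at hy₁'
          simp only [Finset.mem_filter, Finset.mem_univ, true_and]
          exact hy₁'.2.trans (hAε y hy)
        calc ((Sy.card : ℝ)) ≤ _ := Nat.cast_le.mpr (Finset.card_le_card hsub2)
          _ ≤ _ := low_entropy_card hn y.2 (Hcond + ε)
      calc ((Finset.univ.filter P).card : ℝ) / (M : ℝ) ^ N
          ≤ (Sy.card : ℝ) * ((M : ℝ) ^ N / M) / (M : ℝ) ^ N := by
            apply div_le_div_of_nonneg_right hcards hMN.le |>.trans_eq rfl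
        _ = (Sy.card : ℝ) / M := by field_simp
        _ ≤ (((n : ℝ) + 1) ^ K * 2 ^ ((n : ℝ) * (Hcond + ε))) / M := by
            apply div_le_div_of_nonneg_right hSycard hMpos.le |>.trans_eq rfl
        _ ≤ (((n : ℝ) + 1) ^ K * 2 ^ ((n : ℝ) * (Hcond + ε))) * 2 ^ (-(n : ℝ) * R₁) := by
            rw [div_eq_mul_inv]
            apply mul_le_mul_of_nonneg_left _ (by positivity)
            rw [show -(n : ℝ) * R₁ = -((n : ℝ) * R₁) by ring, Real.rpow_neg (by norm_num)]
            apply inv_anti₀ (Real.rpow_pos_of_pos (by norm_num) _) hM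
        _ ≤ Bnd := by
            rw [hBnd]
            rw [show ((n : ℝ) + 1) ^ K * 2 ^ ((n : ℝ) * (Hcond + ε)) * 2 ^ (-(n : ℝ) * R₁)
              = ((n : ℝ) + 1) ^ K * 2 ^ (-(n : ℝ) * R₁) * 2 ^ ((n : ℝ) * (Hcond + ε)) by ring]
            apply mul_le_mul_of_nonneg_left _ (by positivity)
            apply Real.rpow_le_rpow_of_exponent_le (by norm_num)
            have : (0 : ℝ) ≤ (n : ℝ) * ε := by positivity
            nlinarith
    calc ∑ y ∈ Aε, (∏ k, p (y.1 k, y.2 k)) *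
          (((Set.ncard {f : (Fin n → A) → Fin M |
            ∃ y₁' : Fin n → A, y₁' ≠ y.1 ∧ f y₁' = f y.1 ∧
              empCondEntropy y₁' y.2 ≤ empCondEntropy y.1 y.2}) : ℝ) / (M : ℝ) ^ N)
        ≤ ∑ y ∈ Aε, (∏ k, p (y.1 k, y.2 k)) * Bnd := by
          refine Finset.sum_le_sum fun y hy => ?_
          exact mul_le_mul_of_nonneg_left (hterm y hy)
            (Finset.prod_nonneg fun k _ => hp0 _)
      _ = (∑ y ∈ Aε, ∏ k, p (y.1 k, y.2 k)) * Bnd := by rw [Finset.sum_mul]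
      _ ≤ 1 * Bnd := mul_le_mul_of_nonneg_right (sum_prob_le_one p hp0 hp1 Aε) hBnd0
      _ = Bnd := one_mul _
  · -- limit
    intro hR
    set c : ℝ := Hcond + 2 * ε - R₁ with hc
    have hcneg : c < 0 := by simp [hc]; linarith
    set r : ℝ := (2 : ℝ) ^ c with hr
    have hr0 : 0 < r := Real.rpow_pos_of_pos (by norm_num) _
    have hr1 : r < 1 := Real.rpow_lt_one_of_one_lt_of_neg (by norm_num) hcneg
    have hg : Tendsto (fun j : ℕ => (j : ℝ) ^ K * r ^ j) atTop (nhds 0) :=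
      tendsto_pow_const_mul_const_pow_of_lt_one K hr0.le hr1
    have hg' : Tendsto (fun m : ℕ => ((m + 1 : ℕ) : ℝ) ^ K * r ^ (m + 1)) atTop (nhds 0) :=
      hg.comp (tendsto_add_atTop_nat 1)
    have hmain : Tendsto (fun m : ℕ => (1 / r) * (((m + 1 : ℕ) : ℝ) ^ K * r ^ (m + 1)))
        atTop (nhds 0) := by
      simpa using hg'.const_mul (1 / r)
    refine hmain.congr fun m => ?_
    have hexp : (2 : ℝ) ^ (-(m : ℝ) * R₁) * 2 ^ ((m : ℝ) * (Hcond + 2 * ε)) = r ^ m := by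
      rw [← Real.rpow_add (by norm_num)]
      rw [show -(m : ℝ) * R₁ + (m : ℝ) * (Hcond + 2 * ε) = c * m by rw [hc]; ring]
      rw [Real.rpow_mul (by norm_num), Real.rpow_natCast]
    have h2 : ((m : ℝ) + 1) ^ K * 2 ^ (-(m : ℝ) * R₁) * 2 ^ ((m : ℝ) * (Hcond + 2 * ε))
        = ((m : ℝ) + 1) ^ K * r ^ m := by rw [mul_assoc, hexp]
    rw [h2]
    push_cast
    rw [pow_succ]
    have hrne : r ≠ 0 := hr0.ne'
    field_simp
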